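/- Let p be a prime and let A be a nilpotent p-group of finite exponent with nilpotency class c. Then there exists a finitely generated subgroup Ã of A such that for every h = 1, …, c the exponent of γ_h(Ã) equals the exponent of γ_h(A); in particular, Ã also has nilpotency class c. -/

import Mathlib

universe u

section Aux

variable {G : Type u} [Group G]

private lemma lcs_map_subtype_mono {H K : Subgroup G} (hHK : H ≤ K) (n : ℕ) :
    (Subgroup.lowerCentralSeries (⊤ : Subgroup H) n).map H.subtype ≤ (Subgroup.lowerCentralSeries (⊤ : Subgroup K) n).map K.subtype := by
  have h : H.subtype = K.subtype.comp (Subgroup.inclusion hHK) := by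
    ext x; rfl
  rw [h, ← Subgroup.map_map]
  exact Subgroup.map_mono (lowerCentralSeries.map (Subgroup.inclusion hHK) n)

private lemma exists_finset_mem_lcs_closure (n : ℕ) :
    ∀ x ∈ Subgroup.lowerCentralSeries (⊤ : Subgroup G) n, ∃ S : Finset G,
      x ∈ (Subgroup.lowerCentralSeries (⊤ : Subgroup (Subgroup.closure (S : Set G))) n).map
        (Subgroup.closure (S : Set G)).subtype := by
  induction n with
  | zero =>
      intro x _
      exact ⟨{x}, ⟨⟨x, Subgroup.subset_closure (by simp)⟩, Subgroup.mem_top _, rfl⟩⟩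
  | succ n ih =>
      intro x hx
      classical
      rw [Subgroup.mem_lowerCentralSeries_succ_iff] at hx
      refine Subgroup.closure_induction ?_ ?_ ?_ ?_ hx
      · rintro y ⟨a, ha, b, -, rfl⟩
        obtain ⟨S, hS⟩ := ih a ha
        refine ⟨insert b S, ?_⟩
        set T : Finset G := insert b S with hT
        have hST : Subgroup.closure (S : Set G) ≤ Subgroup.closure (T : Set G) :=
          Subgroup.closure_mono (by intro u hu; simp only [hT, Finset.coe_insert]; exact Set.mem_insert_of_mem _ hu)
        have haT := lcs_map_subtype_mono hST n hS
        obtain ⟨a', ha', haa'⟩ := haT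
        have hbT : b ∈ Subgroup.closure (T : Set G) :=
          Subgroup.subset_closure (by simp [hT])
        refine ⟨open scoped commutatorElement in ⁅a', (⟨b, hbT⟩ : Subgroup.closure (T : Set G))⁆, ?_, ?_⟩
        · exact Subgroup.commutator_mem_commutator ha' (Subgroup.mem_top _)
        · simp only [commutatorElement_def, map_mul, map_inv]
          simp [haa']
      · exact ⟨∅, Subgroup.one_mem _⟩
      · rintro y z - - ⟨S, hS⟩ ⟨S', hS'⟩
        refine ⟨S ∪ S', ?_⟩
        have h1 : Subgroup.closure (S : Set G) ≤ Subgroup.closure ((S ∪ S' : Finset G) : Set G) :=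
          Subgroup.closure_mono (by simp)
        have h2 : Subgroup.closure (S' : Set G) ≤ Subgroup.closure ((S ∪ S' : Finset G) : Set G) :=
          Subgroup.closure_mono (by simp)
        exact Subgroup.mul_mem _ (lcs_map_subtype_mono h1 _ hS) (lcs_map_subtype_mono h2 _ hS')
      · rintro y - ⟨S, hS⟩
        exact ⟨S, Subgroup.inv_mem _ hS⟩

/-- In a `p`-group with finite exponent, the exponent is attained by some element. -/
private lemma IsPGroup.exists_orderOf_eq_exponent' {p : ℕ} (hp : p.Prime)
    (hG : IsPGroup p G) (h : Monoid.exponent G ≠ 0) :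
    ∃ g : G, orderOf g = Monoid.exponent G := by
  obtain ⟨g, hg⟩ := hp.exists_orderOf_eq_pow_factorization_exponent (G := G)
  refine ⟨g, ?_⟩
  have hkey : ∀ {q : ℕ}, q.Prime → q ∣ Monoid.exponent G → q = p := by
    intro q hq hqdvd
    obtain ⟨h', hh'⟩ := hq.exists_orderOf_eq_pow_factorization_exponent (G := G)
    have hpos : 0 < (Monoid.exponent G).factorization q :=
      Nat.Prime.factorization_pos_of_dvd hq h hqdvd
    obtain ⟨m, hm⟩ := hG h'
    have hord : orderOf h' ∣ p ^ m := orderOf_dvd_of_pow_eq_one hm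
    have hq1 : q ∣ orderOf h' := hh' ▸ dvd_pow_self q hpos.ne'
    exact (Nat.prime_dvd_prime_iff_eq hq hp).mp (hq.dvd_of_dvd_pow (hq1.trans hord))
  have he := Nat.eq_prime_pow_of_unique_prime_dvd h hkey
  rw [hg, he, Nat.Prime.factorization_pow hp]
  simp

end Aux

/-- For a nilpotent `p`-group `A` of finite exponent and nilpotency class `c`, there is
a finitely generated subgroup `Ã ≤ A` such that for each `h = 1, …, c` the exponent of
`γ_h(Ã)` equals the exponent of `γ_h(A)`; in particular `Ã` also has nilpotency class `c`.
(Here `γ_h(G) = Subgroup.lowerCentralSeries (⊤ : Subgroup G) (h - 1)`, so `γ_1(G) = G`.) -/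
theorem exists_fg_subgroup_same_lcs_exponents
    {p : ℕ} (hp : p.Prime)
    (A : Type u) [Group A] [Group.IsNilpotent A]
    (hA : IsPGroup p A) (hAexp : Monoid.exponent A ≠ 0)
    (c : ℕ) (hc : Group.nilpotencyClass A = c) :
    ∃ Atilde : Subgroup A, Atilde.FG ∧
      (∀ h : ℕ, 1 ≤ h → h ≤ c →
        Monoid.exponent ↥(Subgroup.lowerCentralSeries (⊤ : Subgroup ↥Atilde) (h - 1)) =
          Monoid.exponent ↥(Subgroup.lowerCentralSeries (⊤ : Subgroup A) (h - 1))) ∧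
      ∃ hn : Group.IsNilpotent ↥Atilde, Group.nilpotencyClass ↥Atilde = c := by
  classical
  -- exponent of each lcs term is nonzero
  have hexp : ∀ n : ℕ, Monoid.exponent ↥(Subgroup.lowerCentralSeries (⊤ : Subgroup A) n) ≠ 0 := by
    intro n
    have hd : Monoid.exponent ↥(Subgroup.lowerCentralSeries (⊤ : Subgroup A) n) ∣ Monoid.exponent A :=
      Monoid.exponent_dvd_of_monoidHom (Subgroup.lowerCentralSeries (⊤ : Subgroup A) n).subtype
        (Subgroup.lowerCentralSeries (⊤ : Subgroup A) n).subtype_injective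
    exact fun h0 => hAexp (by simpa [h0] using hd)
  -- witnesses attaining the exponent + finite generating sets
  have H : ∀ n : ℕ, ∃ (S : Finset A) (y : A), y ∈ Subgroup.lowerCentralSeries (⊤ : Subgroup A) n ∧
      orderOf y = Monoid.exponent ↥(Subgroup.lowerCentralSeries (⊤ : Subgroup A) n) ∧
      y ∈ (Subgroup.lowerCentralSeries (⊤ : Subgroup (Subgroup.closure (S : Set A))) n).map
        (Subgroup.closure (S : Set A)).subtype := by
    intro n
    obtain ⟨g, hg⟩ := IsPGroup.exists_orderOf_eq_exponent' hp
      (IsPGroup.to_subgroup hA (Subgroup.lowerCentralSeries (⊤ : Subgroup A) n)) (hexp n)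
    obtain ⟨S, hS⟩ := exists_finset_mem_lcs_closure n (g : A) g.2
    refine ⟨S, (g : A), g.2, ?_, hS⟩
    rw [← hg]
    exact orderOf_injective (Subgroup.lowerCentralSeries (⊤ : Subgroup A) n).subtype
      (Subgroup.lowerCentralSeries (⊤ : Subgroup A) n).subtype_injective g
  choose S y hy hyord hyS using H
  set F : Finset A := (Finset.range c).biUnion S with hF
  set At : Subgroup A := Subgroup.closure (F : Set A) with hAt
  -- key: for n < c the exponents agree
  have key : ∀ n : ℕ, n < c →
      Monoid.exponent ↥(Subgroup.lowerCentralSeries (⊤ : Subgroup ↥At) n) =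
        Monoid.exponent ↥(Subgroup.lowerCentralSeries (⊤ : Subgroup A) n) := by
    intro n hn
    apply Nat.dvd_antisymm
    · have hsub : ∀ x : ↥(Subgroup.lowerCentralSeries (⊤ : Subgroup ↥At) n),
          ((x : ↥At) : A) ∈ Subgroup.lowerCentralSeries (⊤ : Subgroup A) n :=
        fun x => lowerCentralSeries_map_subtype_le At n ⟨(x : ↥At), x.2, rfl⟩
      let f : ↥(Subgroup.lowerCentralSeries (⊤ : Subgroup ↥At) n) →* ↥(Subgroup.lowerCentralSeries (⊤ : Subgroup A) n) :=
        { toFun := fun x => ⟨((x : ↥At) : A), hsub x⟩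
          map_one' := rfl
          map_mul' := fun _ _ => rfl }
      have hf : Function.Injective f := by
        intro a b hab
        have h2 := Subtype.ext_iff.mp hab
        exact Subtype.ext (Subtype.ext h2)
      exact Monoid.exponent_dvd_of_monoidHom f hf
    · have hmem : y n ∈ (Subgroup.lowerCentralSeries (⊤ : Subgroup ↥At) n).map At.subtype := by
        have hle : Subgroup.closure ((S n : Finset A) : Set A) ≤ At :=
          Subgroup.closure_mono (by
            intro u hu
            exact Finset.mem_coe.mpr (Finset.mem_biUnion.mpr
              ⟨n, Finset.mem_range.mpr hn, hu⟩))
        exact lcs_map_subtype_mono hle n (hyS n)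
      obtain ⟨z, hz, hzy⟩ := hmem
      rw [← hyord n]
      have e1 : orderOf z = orderOf (⟨z, hz⟩ : ↥(Subgroup.lowerCentralSeries (⊤ : Subgroup ↥At) n)) :=
        orderOf_injective (Subgroup.lowerCentralSeries (⊤ : Subgroup ↥At) n).subtype
          (Subgroup.lowerCentralSeries (⊤ : Subgroup ↥At) n).subtype_injective ⟨z, hz⟩
      have e2 : orderOf (y n) = orderOf z := by
        rw [← hzy]
        exact orderOf_injective At.subtype At.subtype_injective z
      rw [e2, e1]
      exact Monoid.order_dvd_exponent _
  refine ⟨At, ⟨F, rfl⟩, fun h h1 h2 => key (h - 1) (by omega), inferInstance, ?_⟩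
  have hle : Group.nilpotencyClass ↥At ≤ c := hc ▸ Subgroup.nilpotencyClass_le At
  rcases Nat.eq_zero_or_pos c with rfl | hcpos
  · omega
  · refine le_antisymm hle ?_
    by_contra hlt
    push_neg at hlt
    have hbot : Subgroup.lowerCentralSeries (⊤ : Subgroup ↥At) (c - 1) = ⊥ :=
      lowerCentralSeries_eq_bot_iff_nilpotencyClass_le.mpr (by omega)
    have hone : Monoid.exponent ↥(Subgroup.lowerCentralSeries (⊤ : Subgroup ↥At) (c - 1)) = 1 := by
      rw [hbot]
      exact Monoid.exp_eq_one_iff.mpr inferInstance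
    rw [key (c - 1) (by omega)] at hone
    have hne : Subgroup.lowerCentralSeries (⊤ : Subgroup A) (c - 1) ≠ ⊥ := by
      intro hb
      have := lowerCentralSeries_eq_bot_iff_nilpotencyClass_le.mp hb
      omega
    have hnt : Nontrivial ↥(Subgroup.lowerCentralSeries (⊤ : Subgroup A) (c - 1)) :=
      (Subgroup.nontrivial_iff_ne_bot _).mpr hne
    exact (not_subsingleton _) (Monoid.exp_eq_one_iff.mp hone)
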